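/- arXiv:2304.00255 — 6 statements merged into one kernel-verified Lean document; each statement's English description precedes it below -/
import Mathlib

section
/- Every finite forest with at least one edge has a distant leaf; that is, there exists a leaf v with unique neighbor w such that at most one neighbor of w is not a leaf. -/
open scoped Classical

open SimpleGraph Walk

/-- In an acyclic graph, if `u` lies on path `q` starting at `w` and `w ~ u`,
then the initial segment of `q` up to `u` is the single edge. -/
lemma aux_takeUntil {V : Type*} [DecidableEq V] {G : SimpleGraph V} (hforest : G.IsAcyclic)
    {w b u : V} {q : G.Walk w b} (hq : q.IsPath) (hu : u ∈ q.support)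
    (hadj : G.Adj w u) :
    q.takeUntil u hu = Walk.cons hadj Walk.nil := by
  have h1 : (⟨q.takeUntil u hu, hq.takeUntil hu⟩ : G.Path w u) = Path.singleton hadj :=
    (SimpleGraph.isAcyclic_iff_path_unique.mp hforest) _ _
  simpa [SimpleGraph.Path.singleton] using congrArg Subtype.val h1

/-- A forest with at least one edge has a distant leaf: a leaf `v` with neighbor `w`
such that at most one neighbor of `w` is not a leaf. -/
theorem stmt_0 {V : Type*} [Fintype V] [DecidableEq V]
    (G : SimpleGraph V) [DecidableRel G.Adj]
    (hforest : G.IsAcyclic) (hedge : G.edgeSet.Nonempty) :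
    ∃ v w : V, G.Adj v w ∧ G.degree v = 1 ∧
      ((G.neighborFinset w).filter (fun u => G.degree u ≠ 1)).card ≤ 1 := by
  classical
  set P : ℕ → Prop := fun k => ∃ a b : V, ∃ p : G.Walk a b, p.IsPath ∧ p.length = k with hP
  set n := Nat.findGreatest P (Fintype.card V) with hn
  -- there is a path of length 1
  obtain ⟨e, he⟩ := hedge
  have hP1 : P 1 := by
    revert he
    refine Sym2.ind (fun v w he => ?_) e
    rw [SimpleGraph.mem_edgeSet] at he
    exact ⟨v, w, Walk.cons he Walk.nil, by simp [Walk.isPath_def, he.ne], by simp⟩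
  have hcard1 : 1 ≤ Fintype.card V := by
    obtain ⟨a, b, p, hp, hl⟩ := hP1
    have := hp.length_lt
    omega
  have hmax : ∀ {a b : V} (p : G.Walk a b), p.IsPath → p.length ≤ n := by
    intro a b p hp
    exact Nat.le_findGreatest hp.length_lt.le ⟨a, b, p, hp, rfl⟩
  have hn1 : 1 ≤ n := Nat.le_findGreatest hcard1 hP1
  obtain ⟨a, b, p, hp, hlen⟩ : P n := Nat.findGreatest_spec hcard1 hP1
  cases p with
  | nil => simp at hlen; omega
  | cons h q =>
    rename_i w
    -- h : G.Adj a w, q : G.Walk w b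
    have hq : q.IsPath := hp.of_cons
    have haq : a ∉ q.support := by
      have := hp.support_nodup
      simp at this
      exact this.1
    -- Claim A : every neighbor of a is w
    have claimA : ∀ u : V, G.Adj a u → u = w := by
      intro u hadj
      by_cases hu : u ∈ (Walk.cons h q).support
      · have ht := aux_takeUntil hforest hp hu hadj
        have hspec := (Walk.cons h q).take_spec hu
        rw [ht] at hspec
        have := congrArg (fun r => Walk.getVert r 1) hspec
        simpa [Walk.getVert_cons] using this
      · exfalso
        have hp' : (Walk.cons hadj.symm (Walk.cons h q)).IsPath := hp.cons hu
        have := hmax _ hp'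
        simp [Walk.length_cons] at this
        have h2 := hlen
        simp [Walk.length_cons] at h2
        omega
    have hnbra : G.neighborFinset a = {w} := by
      ext u
      simp only [SimpleGraph.mem_neighborFinset, Finset.mem_singleton]
      exact ⟨fun hadj => claimA u hadj, fun hu => hu ▸ h⟩
    have hdega : G.degree a = 1 := by
      rw [SimpleGraph.degree, hnbra]; simp
    refine ⟨a, w, h, hdega, ?_⟩
    cases q with
    | nil =>
      -- p is a single edge; n = 1
      have hn1' : n = 1 := by simpa using hlen.symm
      have hnbrw : G.neighborFinset b = {a} := by
        ext u
        simp only [SimpleGraph.mem_neighborFinset, Finset.mem_singleton]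
        constructor
        · intro hwu
          by_contra hua
          have hp' : (Walk.cons hwu.symm (Walk.cons h.symm Walk.nil)).IsPath := by
            simp [Walk.isPath_def, hwu.ne', hua, h.ne']
          have := hmax _ hp'
          simp at this
          omega
        · intro hu; exact hu ▸ h.symm
      rw [hnbrw]
      have : ({a} : Finset V).filter (fun u => G.degree u ≠ 1) = ∅ := by
        simp [Finset.filter_singleton, hdega]
      rw [this]; simp
    | cons h2 r =>
      rename_i x
      -- h2 : G.Adj w x
      have hsub : ((G.neighborFinset w).filter (fun u => G.degree u ≠ 1)) ⊆ {x} := by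
        intro u hu
        rw [Finset.mem_filter, SimpleGraph.mem_neighborFinset] at hu
        obtain ⟨hwu, hdeg⟩ := hu
        rw [Finset.mem_singleton]
        by_contra hux
        -- u ≠ a since degree a = 1
        have hua : u ≠ a := by rintro rfl; exact hdeg hdega
        -- u not on q
        have huq : u ∉ (Walk.cons h2 r).support := by
          intro hmem
          have ht := aux_takeUntil hforest hq hmem hwu
          have hspec := (Walk.cons h2 r).take_spec hmem
          rw [ht] at hspec
          have := congrArg (fun r => Walk.getVert r 1) hspec
          simp [Walk.getVert_cons] at this
          exact hux this
        have hup : u ∉ (Walk.cons h (Walk.cons h2 r)).support := by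
          simp only [Walk.support_cons, List.mem_cons]
          push_neg
          exact ⟨hua, by simpa [Walk.support_cons] using huq⟩
        -- every neighbor of u is w, so degree u = 1
        have hnbru : G.neighborFinset u = {w} := by
          ext y
          simp only [SimpleGraph.mem_neighborFinset, Finset.mem_singleton]
          constructor
          · intro hy
            by_contra hyw
            by_cases hyq : y ∈ (Walk.cons h2 r).support
            · -- two paths from w to y
              have hpath2 : (Walk.cons hwu (Walk.cons hy Walk.nil)).IsPath := by
                simp [Walk.isPath_def, hwu.ne, Ne.symm hyw, hy.ne]
              have h1 : (⟨(Walk.cons h2 r).takeUntil y hyq, hq.takeUntil hyq⟩ : G.Path w y)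
                  = ⟨Walk.cons hwu (Walk.cons hy Walk.nil), hpath2⟩ :=
                (SimpleGraph.isAcyclic_iff_path_unique.mp hforest) _ _
              have hw1 : ((Walk.cons h2 r).takeUntil y hyq) = Walk.cons hwu (Walk.cons hy Walk.nil) :=
                congrArg Subtype.val h1
              have humem : u ∈ ((Walk.cons h2 r).takeUntil y hyq).support := by
                rw [hw1]; simp
              have := (Walk.cons h2 r).support_takeUntil_subset hyq humem
              exact huq this
            · -- extend the path
              have hp' : (Walk.cons hy.symm (Walk.cons hwu.symm (Walk.cons h2 r))).IsPath := by
                refine Walk.IsPath.cons (Walk.IsPath.cons hq huq) ?_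
                simp only [Walk.support_cons, List.mem_cons]
                push_neg
                refine ⟨hy.ne', ?_⟩
                simpa [Walk.support_cons] using hyq
              have := hmax _ hp'
              have h2l := hlen
              simp [Walk.length_cons] at this h2l
              omega
          · intro hyw; exact hyw ▸ hwu.symm
        have : G.degree u = 1 := by rw [SimpleGraph.degree, hnbru]; simp
        exact hdeg this
      calc ((G.neighborFinset w).filter (fun u => G.degree u ≠ 1)).card
          ≤ ({x} : Finset V).card := Finset.card_le_card hsub
        _ = 1 := by simp
end

section
/- In a tree, if v_1, v_2, ..., v_r is an induced path of maximal length, then v_r is a distant leaf: all neighbors of v_{r-1} other than v_{r-2} are leaves. -/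
open scoped Classical

/-- `p 0, p 1, ..., p (r-1)` is an induced path in `G`: the vertices are distinct and
two of them are adjacent iff they are consecutive. -/
def IsInducedPath {V : Type*} (G : SimpleGraph V) {r : ℕ} (p : Fin r → V) : Prop :=
  Function.Injective p ∧
    ∀ i j : Fin r, G.Adj (p i) (p j) ↔ ((i : ℕ) + 1 = j ∨ (j : ℕ) + 1 = i)

private lemma aux_walk {V : Type*} {G : SimpleGraph V} (P : ℕ → V) (r : ℕ)
    (hadj : ∀ k, k + 1 < r → G.Adj (P k) (P (k + 1)))
    (hinj : ∀ k l, k < r → l < r → P k = P l → k = l) :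
    ∀ d i j, j < r → i + d = j → ∃ w : G.Walk (P i) (P j), w.IsPath ∧ w.length = d ∧
      ∀ x ∈ w.support, ∃ k, i ≤ k ∧ k ≤ j ∧ x = P k := by
  intro d
  induction d with
  | zero =>
    intro i j hj hij
    have : i = j := by omega
    subst this
    exact ⟨.nil, by simp, by simp, by
      intro x hx
      simp only [SimpleGraph.Walk.support_nil, List.mem_singleton] at hx
      exact ⟨i, le_rfl, le_rfl, hx⟩⟩
  | succ d ih =>
    intro i j hj hij
    obtain ⟨w, hw1, hw2, hw3⟩ := ih (i + 1) j hj (by omega)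
    refine ⟨.cons (hadj i (by omega)) w, ?_, by simp [hw2], ?_⟩
    · refine hw1.cons ?_
      intro hmem
      obtain ⟨k, hk1, hk2, hk3⟩ := hw3 _ hmem
      have := hinj i k (by omega) (by omega) hk3
      omega
    · intro x hx
      rw [SimpleGraph.Walk.support_cons, List.mem_cons] at hx
      rcases hx with hx | hx
      · exact ⟨i, le_rfl, by omega, hx⟩
      · obtain ⟨k, hk1, hk2, hk3⟩ := hw3 _ hx
        exact ⟨k, by omega, hk2, hk3⟩

private lemma two_attach {V : Type*} {G : SimpleGraph V}
    (huniq : ∀ {a b : V} (w1 w2 : G.Walk a b), w1.IsPath → w2.IsPath → w1 = w2)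
    (P : ℕ → V) (r : ℕ)
    (hadj : ∀ k, k + 1 < r → G.Adj (P k) (P (k + 1)))
    (hinj : ∀ k l, k < r → l < r → P k = P l → k = l)
    {u : V} {i m : ℕ}
    (him : i < m) (hm : m < r) (h1 : G.Adj u (P i)) (h2 : G.Adj u (P m)) :
    m = i + 2 ∧ u = P (i + 1) := by
  obtain ⟨w, hwp, hwl, hws⟩ := aux_walk P r hadj hinj (m - i) i m hm (by omega)
  have hPim : P i ≠ P m := fun he => by have := hinj i m (by omega) hm he; omega
  set w1 : G.Walk (P i) (P m) := .cons h1.symm (.cons h2 .nil) with hw1def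
  have hw1p : w1.IsPath := by
    rw [SimpleGraph.Walk.isPath_def]
    simp only [hw1def, SimpleGraph.Walk.support_cons, SimpleGraph.Walk.support_nil]
    refine List.nodup_cons.mpr ⟨?_, List.nodup_cons.mpr ⟨?_, List.nodup_singleton _⟩⟩
    · simp only [List.mem_cons, List.mem_singleton]
      push_neg
      exact ⟨h1.ne', hPim, List.not_mem_nil⟩
    · simp only [List.mem_singleton]
      exact h2.ne
  have heq := huniq w1 w hw1p hwp
  have hlen : w1.length = m - i := by rw [heq, hwl]
  have hlen2 : w1.length = 2 := by simp [hw1def]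
  have hm2 : m = i + 2 := by omega
  have humem : u ∈ w.support := by
    rw [← heq]
    simp [hw1def, SimpleGraph.Walk.support_cons]
  obtain ⟨k, hk1, hk2, hk3⟩ := hws u humem
  have hk_ne_i : k ≠ i := fun h => h1.ne (by rw [hk3, h])
  have hk_ne_m : k ≠ m := fun h => h2.ne (by rw [hk3, h])
  have : k = i + 1 := by omega
  exact ⟨hm2, by rw [hk3, this]⟩

private lemma no_second {V : Type*} {G : SimpleGraph V}
    (huniq : ∀ {a b : V} (w1 w2 : G.Walk a b), w1.IsPath → w2.IsPath → w1 = w2)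
    (P : ℕ → V) (r : ℕ)
    (hadj : ∀ k, k + 1 < r → G.Adj (P k) (P (k + 1)))
    (hinj : ∀ k l, k < r → l < r → P k = P l → k = l)
    {u w : V} {m i : ℕ} (hm : m < r) (hi : i < r)
    (hu : ∀ k, k < r → u ≠ P k) (hw : ∀ k, k < r → w ≠ P k)
    (hum : G.Adj u (P m)) (huw : G.Adj u w) (hwi : G.Adj w (P i)) : False := by
  have hw1 : G.Walk u (P i) := .cons huw (.cons hwi .nil)
  set w1 : G.Walk u (P i) := .cons huw (.cons hwi .nil) with hw1def
  have hw1p : w1.IsPath := by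
    rw [SimpleGraph.Walk.isPath_def]
    simp only [hw1def, SimpleGraph.Walk.support_cons, SimpleGraph.Walk.support_nil]
    refine List.nodup_cons.mpr ⟨?_, List.nodup_cons.mpr ⟨?_, List.nodup_singleton _⟩⟩
    · simp only [List.mem_cons, List.mem_singleton]
      push_neg
      exact ⟨huw.ne, hu i hi, List.not_mem_nil⟩
    · simp only [List.mem_singleton]
      exact hw i hi
  by_cases h : i = m
  · subst h
    set w2 : G.Walk u (P i) := .cons hum .nil with hw2def
    have hw2p : w2.IsPath := by
      rw [SimpleGraph.Walk.isPath_def]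
      simp [hw2def, hum.ne]
    have heq := huniq w1 w2 hw1p hw2p
    have : w1.length = w2.length := by rw [heq]
    simp [hw1def, hw2def] at this
  · -- a path from P m to P i along the induced path
    have hwalk : ∃ wk : G.Walk (P m) (P i), wk.IsPath ∧
        ∀ x ∈ wk.support, ∃ k, k < r ∧ x = P k := by
      rcases lt_or_gt_of_ne h with hlt | hgt
      · -- i < m
        obtain ⟨wk, h1, _, h3⟩ := aux_walk P r hadj hinj (m - i) i m hm (by omega)
        refine ⟨wk.reverse, h1.reverse, ?_⟩
        intro x hx
        rw [SimpleGraph.Walk.support_reverse, List.mem_reverse] at hx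
        obtain ⟨k, hk1, hk2, hk3⟩ := h3 x hx
        exact ⟨k, by omega, hk3⟩
      · -- m < i
        obtain ⟨wk, h1, _, h3⟩ := aux_walk P r hadj hinj (i - m) m i hi (by omega)
        refine ⟨wk, h1, ?_⟩
        intro x hx
        obtain ⟨k, hk1, hk2, hk3⟩ := h3 x hx
        exact ⟨k, by omega, hk3⟩
    obtain ⟨wk, hwkp, hwks⟩ := hwalk
    set w2 : G.Walk u (P i) := .cons hum wk with hw2def
    have hw2p : w2.IsPath := by
      refine hwkp.cons ?_
      intro hmem
      obtain ⟨k, hk1, hk3⟩ := hwks u hmem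
      exact hu k hk1 hk3
    have heq := huniq w1 w2 hw1p hw2p
    have hwmem : w ∈ w2.support := by
      rw [← heq]
      simp [hw1def, SimpleGraph.Walk.support_cons]
    rw [hw2def, SimpleGraph.Walk.support_cons, List.mem_cons] at hwmem
    rcases hwmem with hwmem | hwmem
    · exact huw.ne hwmem.symm
    · obtain ⟨k, hk1, hk3⟩ := hwks w hwmem
      exact hw k hk1 hk3

/-- In a tree, the last vertex of an induced path of maximal length is a distant leaf:
it has degree one, and every neighbor of the previous vertex other than the
second-to-previous vertex is a leaf. -/
theorem stmt_1 {V : Type*} [Fintype V] [DecidableEq V]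
    (G : SimpleGraph V) [DecidableRel G.Adj] (htree : G.IsTree)
    (r : ℕ) (hr : 3 ≤ r) (p : Fin r → V) (hp : IsInducedPath G p)
    (hmax : ∀ (s : ℕ), r < s → ∀ q : Fin s → V, ¬ IsInducedPath G q) :
    G.degree (p ⟨r - 1, by omega⟩) = 1 ∧
      ∀ u : V, G.Adj (p ⟨r - 2, by omega⟩) u → u ≠ p ⟨r - 3, by omega⟩ →
        G.degree u = 1 := by
  have huniq : ∀ {a b : V} (w1 w2 : G.Walk a b), w1.IsPath → w2.IsPath → w1 = w2 :=
    fun w1 w2 h1 h2 => (htree.existsUnique_path _ _).unique h1 h2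
  set P : ℕ → V := fun k => p ⟨min k (r - 1), by omega⟩ with hPdef
  have hP : ∀ k (h : k < r), P k = p ⟨k, h⟩ := by
    intro k h
    simp only [hPdef]
    congr 1
    ext
    simp
    omega
  have hadj_iff : ∀ k l, k < r → l < r → (G.Adj (P k) (P l) ↔ (k + 1 = l ∨ l + 1 = k)) := by
    intro k l hk hl
    rw [hP k hk, hP l hl, hp.2 ⟨k, hk⟩ ⟨l, hl⟩]
  have hadjP : ∀ k, k + 1 < r → G.Adj (P k) (P (k + 1)) := by
    intro k h
    exact (hadj_iff k (k + 1) (by omega) h).2 (Or.inl rfl)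
  have hinjP : ∀ k l, k < r → l < r → P k = P l → k = l := by
    intro k l hk hl he
    rw [hP k hk, hP l hl] at he
    simpa using congrArg Fin.val (hp.1 he)
  -- Part 1 : every neighbor of P (r-1) equals P (r-2)
  have hlast : ∀ u : V, G.Adj (P (r - 1)) u → u = P (r - 2) := by
    intro u hadju
    by_cases hur : ∃ k, k < r ∧ u = P k
    · obtain ⟨k, hk, rfl⟩ := hur
      have := (hadj_iff (r - 1) k (by omega) hk).1 hadju
      have : k = r - 2 := by omega
      rw [this]
    · push_neg at hur
      -- u is adjacent to no other path vertex
      have hno : ∀ j, j < r - 1 → ¬ G.Adj (P j) u := by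
        intro j hj hadj'
        obtain ⟨_, he⟩ := two_attach huniq P r hadjP hinjP (i := j) (m := r - 1)
          hj (by omega) hadj'.symm hadju.symm
        exact hur (j + 1) (by omega) he
      -- extend the path, contradicting maximality
      refine absurd ?_ (hmax (r + 1) (by omega) (fun i => if h : (i : ℕ) < r then P i else u))
      constructor
      · intro a b hab
        simp only at hab
        by_cases ha : (a : ℕ) < r <;> by_cases hb : (b : ℕ) < r <;>
          simp only [ha, hb, dif_pos, dif_neg, not_lt] at hab ⊢
        · exact Fin.ext (hinjP a b ha hb hab)
        · exact absurd hab.symm (hur a ha)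
        · exact absurd hab (hur b hb)
        · have ha' : (a : ℕ) = r := by omega
          have hb' : (b : ℕ) = r := by omega
          exact Fin.ext (by omega)
      · intro i j
        by_cases hi : (i : ℕ) < r <;> by_cases hj : (j : ℕ) < r <;>
          simp only [hi, hj, dif_pos, dif_neg, not_lt]
        · rw [hadj_iff i j hi hj]
        · -- q i = P i, q j = u, (j : ℕ) = r
          have hj' : (j : ℕ) = r := by omega
          constructor
          · intro hadj'
            by_cases hi' : (i : ℕ) < r - 1
            · exact absurd hadj' (hno i hi')
            · left; omega
          · rintro (h | h)
            · have : (i : ℕ) = r - 1 := by omega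
              rw [this]
              exact hadju
            · omega
        · have hi' : (i : ℕ) = r := by omega
          constructor
          · intro hadj'
            by_cases hj' : (j : ℕ) < r - 1
            · exact absurd hadj'.symm (hno j hj')
            · right; omega
          · rintro (h | h)
            · omega
            · have : (j : ℕ) = r - 1 := by omega
              rw [this]
              exact hadju.symm
        · constructor
          · intro hadj'
            exact absurd rfl hadj'.ne
          · intro h
            omega
  have hdeg_last : G.degree (p ⟨r - 1, by omega⟩) = 1 := by
    rw [← hP (r - 1) (by omega), SimpleGraph.degree]
    rw [Finset.card_eq_one]
    refine ⟨P (r - 2), ?_⟩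
    ext x
    simp only [SimpleGraph.mem_neighborFinset, Finset.mem_singleton]
    constructor
    · exact hlast x
    · rintro rfl
      exact ((hadj_iff (r - 1) (r - 2) (by omega) (by omega)).2 (Or.inr (by omega)))
  refine ⟨hdeg_last, ?_⟩
  intro u hu hu3
  rw [← hP (r - 2) (by omega)] at hu
  rw [← hP (r - 3) (by omega)] at hu3
  by_cases hur : ∃ k, k < r ∧ u = P k
  · obtain ⟨k, hk, rfl⟩ := hur
    have := (hadj_iff (r - 2) k (by omega) hk).1 hu
    have hk' : k = r - 1 := by
      rcases this with h | h
      · omega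
      · exfalso; apply hu3; congr 1; omega
    subst hk'
    rw [hP (r - 1) (by omega)]
    exact hdeg_last
  · push_neg at hur
    -- u is not a path vertex; u is adjacent to P (r-2) only among path vertices
    have huno : ∀ j, j < r → j ≠ r - 2 → ¬ G.Adj (P j) u := by
      intro j hj hj2 hadj'
      rcases lt_trichotomy j (r - 2) with h | h | h
      · obtain ⟨_, he⟩ := two_attach huniq P r hadjP hinjP (i := j) (m := r - 2)
          h (by omega) hadj'.symm hu.symm
        exact hur (j + 1) (by omega) he
      · exact hj2 h
      · obtain ⟨he, _⟩ := two_attach huniq P r hadjP hinjP (i := r - 2) (m := j)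
          h hj hu.symm hadj'.symm
        omega
    -- every neighbor of u is P (r - 2)
    have hnbr : ∀ w : V, G.Adj u w → w = P (r - 2) := by
      intro w huw
      by_cases hwr : ∃ k, k < r ∧ w = P k
      · obtain ⟨k, hk, rfl⟩ := hwr
        by_contra hne
        have hkne : k ≠ r - 2 := fun h => hne (by rw [h])
        exact huno k hk hkne huw.symm
      · push_neg at hwr
        -- w is also not a path vertex; w is adjacent to no path vertex
        have hwno : ∀ j, j < r → ¬ G.Adj (w) (P j) := by
          intro j hj hadj'
          exact no_second huniq P r hadjP hinjP (m := r - 2) (i := j)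
            (by omega) hj hur hwr hu.symm huw hadj'
        -- extend the path p 0, ..., p (r-2), u, w ; contradiction with maximality
        exfalso
        set q : Fin (r + 1) → V :=
          fun i => if (i : ℕ) < r - 1 then P i else if (i : ℕ) = r - 1 then u else w with hqdef
        have hq1 : ∀ i : Fin (r + 1), (i : ℕ) < r - 1 → q i = P i := by
          intro i h; simp only [hqdef]; rw [if_pos h]
        have hq2 : ∀ i : Fin (r + 1), (i : ℕ) = r - 1 → q i = u := by
          intro i h; simp only [hqdef]; rw [if_neg (by omega), if_pos h]
        have hq3 : ∀ i : Fin (r + 1), (i : ℕ) = r → q i = w := by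
          intro i h; simp only [hqdef]; rw [if_neg (by omega), if_neg (by omega)]
        have classes : ∀ i : Fin (r + 1), (i : ℕ) < r - 1 ∨ (i : ℕ) = r - 1 ∨ (i : ℕ) = r := by
          intro i; omega
        refine absurd ⟨?_, ?_⟩ (hmax (r + 1) (by omega) q)
        · -- injectivity
          intro a b hab
          apply Fin.ext
          rcases classes a with ha | ha | ha <;> rcases classes b with hb | hb | hb
          · rw [hq1 a ha, hq1 b hb] at hab
            exact hinjP a b (by omega) (by omega) hab
          · rw [hq1 a ha, hq2 b hb] at hab
            exact absurd hab.symm (hur a (by omega))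
          · rw [hq1 a ha, hq3 b hb] at hab
            exact absurd hab.symm (hwr a (by omega))
          · rw [hq2 a ha, hq1 b hb] at hab
            exact absurd hab (hur b (by omega))
          · omega
          · rw [hq2 a ha, hq3 b hb] at hab
            exact absurd hab huw.ne
          · rw [hq3 a ha, hq1 b hb] at hab
            exact absurd hab (hwr b (by omega))
          · rw [hq3 a ha, hq2 b hb] at hab
            exact absurd hab.symm huw.ne
          · omega
        · -- adjacency characterization
          intro i j
          rcases classes i with hi | hi | hi <;> rcases classes j with hj | hj | hj
          · rw [hq1 i hi, hq1 j hj]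
            exact hadj_iff i j (by omega) (by omega)
          · rw [hq1 i hi, hq2 j hj]
            constructor
            · intro hadj'
              by_cases hieq : (i : ℕ) = r - 2
              · left; omega
              · exact absurd hadj' (huno i (by omega) hieq)
            · rintro (h | h)
              · have : (i : ℕ) = r - 2 := by omega
                rw [this]; exact hu
              · omega
          · rw [hq1 i hi, hq3 j hj]
            constructor
            · intro hadj'
              exact absurd hadj'.symm (hwno i (by omega))
            · rintro (h | h) <;> omega
          · rw [hq2 i hi, hq1 j hj]
            constructor
            · intro hadj'
              by_cases hjeq : (j : ℕ) = r - 2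
              · right; omega
              · exact absurd hadj'.symm (huno j (by omega) hjeq)
            · rintro (h | h)
              · omega
              · have : (j : ℕ) = r - 2 := by omega
                rw [this]; exact hu.symm
          · rw [hq2 i hi, hq2 j hj]
            constructor
            · intro hadj'; exact absurd rfl hadj'.ne
            · intro h; omega
          · rw [hq2 i hi, hq3 j hj]
            constructor
            · intro _; left; omega
            · intro _; exact huw
          · rw [hq3 i hi, hq1 j hj]
            constructor
            · intro hadj'
              exact absurd hadj' (hwno j (by omega))
            · rintro (h | h) <;> omega
          · rw [hq3 i hi, hq2 j hj]
            constructor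
            · intro _; right; omega
            · intro _; exact huw.symm
          · rw [hq3 i hi, hq3 j hj]
            constructor
            · intro hadj'; exact absurd rfl hadj'.ne
            · intro h; omega
    -- conclude the degree of u
    rw [SimpleGraph.degree, Finset.card_eq_one]
    refine ⟨P (r - 2), ?_⟩
    ext x
    simp only [SimpleGraph.mem_neighborFinset, Finset.mem_singleton]
    exact ⟨hnbr x, fun h => h ▸ hu.symm⟩
end

section
/- Let G be a forest and 2 ≤ k ≤ ν(G). Then aim(G,k) ≤ aim(G,k-1)+1. -/
open scoped Classical

noncomputable section

/-- `M` is a matching of `G`: a set of edges of `G` that are pairwise vertex-disjoint. -/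
def IsMatchingSet {V : Type*} (G : SimpleGraph V) (M : Finset (Sym2 V)) : Prop :=
  (∀ e ∈ M, e ∈ G.edgeSet) ∧
    ∀ e ∈ M, ∀ f ∈ M, e ≠ f → ∀ v : V, v ∈ e → v ∉ f

/-- The matching number `ν(G)`: the maximum size of a matching of `G`. -/
def matchingNumber {V : Type*} [Fintype V] (G : SimpleGraph V) : ℕ :=
  sSup {k | ∃ M : Finset (Sym2 V), IsMatchingSet G M ∧ M.card = k}

/-- Two edges `e, f` form a gap in `G`: they are vertex-disjoint and no edge of `G`
joins an endpoint of `e` to an endpoint of `f` (an induced matching of size 2). -/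
def IsGap {V : Type*} (G : SimpleGraph V) (e f : Sym2 V) : Prop :=
  (∀ v : V, v ∈ e → v ∉ f) ∧ ∀ u v : V, u ∈ e → v ∈ f → ¬ G.Adj u v

/-- The set of vertices covered by a set of edges `M`. -/
def matchVerts {V : Type*} (M : Finset (Sym2 V)) : Set V := {v | ∃ e ∈ M, v ∈ e}

/-- `M` is a `k`-admissible matching of `G`: a matching admitting a partition into
nonempty parts `M₁, …, M_r` such that edges from distinct parts form gaps in `G`,
`|M₁| + ⋯ + |M_r| ≤ r + k - 1`, and the induced subgraph on the vertices of each
part is a forest. -/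
def IsAdmissibleMatching {V : Type*} (G : SimpleGraph V) (k : ℕ)
    (M : Finset (Sym2 V)) : Prop :=
  IsMatchingSet G M ∧
    ∃ P : Finset (Finset (Sym2 V)),
      (∀ p ∈ P, p.Nonempty) ∧
      (∀ p ∈ P, ∀ q ∈ P, p ≠ q → Disjoint p q) ∧
      P.biUnion id = M ∧
      (∀ p ∈ P, ∀ q ∈ P, p ≠ q → ∀ e ∈ p, ∀ f ∈ q, IsGap G e f) ∧
      M.card + 1 ≤ P.card + k ∧
      ∀ p ∈ P, (SimpleGraph.induce (matchVerts p) G).IsAcyclic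

/-- The `k`-admissible matching number `aim(G,k)`: the maximum size of a
`k`-admissible matching of `G` (`0` if none exists). -/
def aim {V : Type*} [Fintype V] (G : SimpleGraph V) (k : ℕ) : ℕ :=
  sSup {m | ∃ M : Finset (Sym2 V), IsAdmissibleMatching G k M ∧ M.card = m}


lemma aux_bdd {V : Type*} [Fintype V] (G : SimpleGraph V) (j : ℕ) :
    BddAbove {m | ∃ M : Finset (Sym2 V), IsAdmissibleMatching G j M ∧ M.card = m} := by
  refine ⟨Fintype.card (Sym2 V), ?_⟩
  rintro m ⟨M, _, rfl⟩
  exact Finset.card_le_univ M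

/-- For a forest `G` and `2 ≤ k ≤ ν(G)`, `aim(G,k) ≤ aim(G,k-1) + 1`. -/
theorem stmt_6 {V : Type*} [Fintype V] (G : SimpleGraph V)
    (hforest : G.IsAcyclic) (k : ℕ) (h1 : 2 ≤ k) (h2 : k ≤ matchingNumber G) :
    aim G k ≤ aim G (k - 1) + 1 := by
  refine csSup_le' ?_
  rintro m ⟨M, ⟨hmatch, P, hne, hdisj, hunion, hgap, hcard, hfor⟩, rfl⟩
  by_cases hall : ∀ p ∈ P, p.card ≤ 1
  · -- all parts singletons: M is already (k-1)-admissible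
    have hMP : M.card = P.card := by
      rw [← hunion, Finset.card_biUnion (t := id) (fun p hp q hq hpq => hdisj p hp q hq hpq)]
      rw [Finset.card_eq_sum_ones P]
      refine Finset.sum_congr rfl fun p hp => ?_
      have h3 := (hne p hp).card_pos
      have h4 := hall p hp
      simp only [id]; omega
    have hle : M.card ≤ aim G (k-1) := by
      refine le_csSup (aux_bdd G (k-1)) ⟨M, ⟨hmatch, P, hne, hdisj, hunion, hgap, ?_, hfor⟩, rfl⟩
      omega
    omega
  · push_neg at hall
    obtain ⟨p, hp, hp2⟩ := hall
    obtain ⟨e, he⟩ := hne p hp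
    set p' := p.erase e with hp'def
    have hp'card : p'.card = p.card - 1 := Finset.card_erase_of_mem he
    have hp'ne : p'.Nonempty := by rw [← Finset.card_pos]; omega
    have hp'sub : p' ⊆ p := Finset.erase_subset e p
    have hp'notin : p' ∉ P.erase p := by
      intro hmem
      obtain ⟨x, hx⟩ := hp'ne
      exact Finset.disjoint_left.mp
        (hdisj p' (Finset.mem_of_mem_erase hmem) p hp (Finset.ne_of_mem_erase hmem))
        hx (hp'sub hx)
    set P' := insert p' (P.erase p) with hP'def
    have heM : e ∈ M := by rw [← hunion]; exact Finset.mem_biUnion.mpr ⟨p, hp, he⟩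
    have hPpos : 0 < P.card := Finset.card_pos.mpr ⟨p, hp⟩
    have hP'card : P'.card = P.card := by
      rw [hP'def, Finset.card_insert_of_notMem hp'notin, Finset.card_erase_of_mem hp]
      omega
    have henotelse : ∀ q ∈ P.erase p, e ∉ q := fun q hq heq =>
      Finset.disjoint_left.mp
        (hdisj q (Finset.mem_of_mem_erase hq) p hp (Finset.ne_of_mem_erase hq)) heq he
    have hunion' : P'.biUnion id = M.erase e := by
      ext f
      simp only [hP'def, Finset.mem_biUnion, Finset.mem_insert, Finset.mem_erase, id]
      constructor
      · rintro ⟨q, hq | ⟨hqp, hqP⟩, hf⟩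
        · rw [hq] at hf
          refine ⟨(Finset.mem_erase.mp hf).1, ?_⟩
          rw [← hunion]
          exact Finset.mem_biUnion.mpr ⟨p, hp, hp'sub hf⟩
        · refine ⟨fun h => henotelse q (Finset.mem_erase.mpr ⟨hqp, hqP⟩) (h ▸ hf), ?_⟩
          rw [← hunion]
          exact Finset.mem_biUnion.mpr ⟨q, hqP, hf⟩
      · rintro ⟨hfe, hfM⟩
        rw [← hunion] at hfM
        obtain ⟨q, hq, hf⟩ := Finset.mem_biUnion.mp hfM
        by_cases hqp : q = p
        · exact ⟨p', Or.inl rfl, Finset.mem_erase.mpr ⟨hfe, hqp ▸ hf⟩⟩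
        · exact ⟨q, Or.inr ⟨hqp, hq⟩, hf⟩
    have hle : (M.erase e).card ≤ aim G (k-1) := by
      refine le_csSup (aux_bdd G (k-1)) ⟨M.erase e, ⟨?_, P', ?_, ?_, hunion', ?_, ?_, ?_⟩, rfl⟩
      · exact ⟨fun f hf => hmatch.1 f (Finset.erase_subset e M hf),
          fun f hf g hg => hmatch.2 f (Finset.erase_subset e M hf) g (Finset.erase_subset e M hg)⟩
      · intro q hq
        rcases Finset.mem_insert.mp hq with h | h
        · exact h ▸ hp'ne
        · exact hne q (Finset.mem_of_mem_erase h)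
      · intro q hq r hr hqr
        rcases Finset.mem_insert.mp hq with h | h <;> rcases Finset.mem_insert.mp hr with h' | h'
        · exact absurd (h.trans h'.symm) hqr
        · subst h
          exact (hdisj p hp r (Finset.mem_of_mem_erase h') (Finset.ne_of_mem_erase h').symm).mono_left hp'sub
        · subst h'
          exact ((hdisj p hp q (Finset.mem_of_mem_erase h) (Finset.ne_of_mem_erase h).symm).mono_left hp'sub).symm
        · exact hdisj q (Finset.mem_of_mem_erase h) r (Finset.mem_of_mem_erase h') hqr
      · intro q hq r hr hqr f hf g hg
        rcases Finset.mem_insert.mp hq with h | h <;> rcases Finset.mem_insert.mp hr with h' | h'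
        · exact absurd (h.trans h'.symm) hqr
        · subst h
          exact hgap p hp r (Finset.mem_of_mem_erase h') (Finset.ne_of_mem_erase h').symm
            f (hp'sub hf) g hg
        · subst h'
          exact hgap q (Finset.mem_of_mem_erase h) p hp (Finset.ne_of_mem_erase h)
            f hf g (hp'sub hg)
        · exact hgap q (Finset.mem_of_mem_erase h) r (Finset.mem_of_mem_erase h')
            (fun hh => hqr (hh)) f hf g hg
      · rw [Finset.card_erase_of_mem heM, hP'card]
        have hMpos : 0 < M.card := Finset.card_pos.mpr ⟨e, heM⟩
        omega
      · intro q _ v c hc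
        exact hforest (c.map (SimpleGraph.Embedding.induce (matchVerts q) (G := G)).toHom)
          (hc.map (SimpleGraph.Embedding.induce (matchVerts q) (G := G)).injective)
    have hce : (M.erase e).card = M.card - 1 := Finset.card_erase_of_mem heM
    have hMpos : 0 < M.card := Finset.card_pos.mpr ⟨e, heM⟩
    omega

end
end

section
/- Let G be a forest with a distant edge {w,v} (v a distant leaf with neighbor w). Then for all 2 ≤ k ≤ ν(G), aim(G \ {w,v}, k-1) + 1 ≤ aim(G,k). -/
open scoped Classical

noncomputable section

/-- The graph obtained from `G` by deleting the vertices in `s` (keeping the same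
vertex type; deleted vertices become isolated). -/
def delV {V : Type*} (G : SimpleGraph V) (s : Set V) : SimpleGraph V where
  Adj u v := G.Adj u v ∧ u ∉ s ∧ v ∉ s
  symm := ⟨fun u v h => ⟨h.1.symm, h.2.2, h.2.1⟩⟩
  loopless := ⟨fun v h => G.loopless.irrefl v h.1⟩

lemma acyclic_induce' {V : Type*} (G : SimpleGraph V) (h : G.IsAcyclic) (s : Set V) :
    (SimpleGraph.induce s G).IsAcyclic := by
  intro x c hc
  exact h (c.map (SimpleGraph.Embedding.induce s).toHom) (hc.map Subtype.val_injective)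

lemma isGap_symm' {V : Type*} {G : SimpleGraph V} {e f : Sym2 V} (h : IsGap G e f) :
    IsGap G f e :=
  ⟨fun u huf hue => h.1 u hue huf, fun a b ha hb hab => h.2 b a hb ha hab.symm⟩

lemma edge_endpoint' {V : Type*} {H : SimpleGraph V} {e : Sym2 V} (he : e ∈ H.edgeSet)
    {u : V} (hu : u ∈ e) : ∃ c, H.Adj u c := by
  induction e using Sym2.ind with
  | _ a b =>
    rw [SimpleGraph.mem_edgeSet] at he
    rcases Sym2.mem_iff.mp hu with rfl | rfl
    · exact ⟨b, he⟩
    · exact ⟨a, he.symm⟩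

/-- Let `G` be a forest with a distant edge `{w,v}`: `v` is a leaf with neighbor `w`
and at most one neighbor of `w` is not a leaf. Then for all `2 ≤ k ≤ ν(G)`,
`aim(G \\ {w,v}, k-1) + 1 ≤ aim(G,k)`. -/
theorem stmt_7 {V : Type*} [Fintype V] [DecidableEq V] (G : SimpleGraph V)
    [DecidableRel G.Adj] (hforest : G.IsAcyclic) (v w : V)
    (hadj : G.Adj v w) (hleaf : G.degree v = 1)
    (hdistant : ((G.neighborFinset w).filter (fun u => G.degree u ≠ 1)).card ≤ 1)
    (k : ℕ) (h1 : 2 ≤ k) (h2 : k ≤ matchingNumber G) :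
    aim (delV G {w, v}) (k - 1) + 1 ≤ aim G k := by
  set G' := delV G ({w, v} : Set V) with hG'
  have hle : G' ≤ G := fun {a b} h => h.1
  have hend : ∀ e ∈ G'.edgeSet, ∀ u ∈ e, u ≠ w ∧ u ≠ v := by
    intro e he u hu
    obtain ⟨c, hc⟩ := edge_endpoint' he hu
    have : u ∉ ({w, v} : Set V) := hc.2.1
    simp only [Set.mem_insert_iff, Set.mem_singleton_iff] at this
    exact ⟨fun h => this (Or.inl h), fun h => this (Or.inr h)⟩
  have hvnbr : ∀ u, G.Adj v u → u = w := by
    intro u hu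
    have h1' : u ∈ G.neighborFinset v := by simpa using hu
    have h2' : w ∈ G.neighborFinset v := by simpa using hadj
    exact Finset.card_le_one.mp (le_of_eq hleaf) u h1' w h2'
  have hbdd : ∀ (H : SimpleGraph V) (j : ℕ),
      BddAbove {m | ∃ M : Finset (Sym2 V), IsAdmissibleMatching H j M ∧ M.card = m} := by
    intro H j
    exact ⟨Fintype.card (Sym2 V), fun m ⟨M, _, hc⟩ => hc ▸ Finset.card_le_univ M⟩
  have hne0 : (0 : ℕ) ∈ {m | ∃ M : Finset (Sym2 V), IsAdmissibleMatching G' (k-1) M ∧ M.card = m} := by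
    refine ⟨∅, ⟨⟨by simp, by simp⟩, ∅, by simp, by simp, by simp, by simp,
      by simp; omega, by simp⟩, rfl⟩
  have hmem := Nat.sSup_mem ⟨0, hne0⟩ (hbdd G' (k-1))
  obtain ⟨M', hM', hcard⟩ := hmem
  obtain ⟨⟨hedges, hdisj⟩, P', hPne, hPdisj, hPunion, hPgap, hPcard, hPforest⟩ := hM'
  have fact1 : ∀ f ∈ M', ∀ u ∈ f, u ≠ w ∧ u ≠ v := fun f hf => hend f (hedges f hf)
  have hmemM' : ∀ a : Sym2 V, a ∈ M' ↔ ∃ p ∈ P', a ∈ p := by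
    intro a
    rw [← hPunion]
    simp [Finset.mem_biUnion]
  have he0M : s(v, w) ∉ M' := fun h => (fact1 s(v, w) h w (by simp)).1 rfl
  have hsub : ∀ p ∈ P', p ⊆ M' := by
    intro p hp a ha
    exact (hmemM' a).mpr ⟨p, hp, ha⟩
  have hMcard : (insert s(v, w) M').card = M'.card + 1 :=
    Finset.card_insert_of_notMem he0M
  have hmatch : IsMatchingSet G (insert s(v, w) M') := by
    constructor
    · intro e he
      rcases Finset.mem_insert.mp he with rfl | he
      · rw [SimpleGraph.mem_edgeSet]; exact hadj
      · exact SimpleGraph.edgeSet_mono hle (hedges e he)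
    · intro e he f hf hef u hue huf
      rcases Finset.mem_insert.mp he with rfl | he <;>
        rcases Finset.mem_insert.mp hf with rfl | hf
      · exact hef rfl
      · rcases Sym2.mem_iff.mp hue with h | h
        · exact (fact1 f hf u huf).2 h
        · exact (fact1 f hf u huf).1 h
      · rcases Sym2.mem_iff.mp huf with h | h
        · exact (fact1 e he u hue).2 h
        · exact (fact1 e he u hue).1 h
      · exact hdisj e he f hf hef u hue huf
  have hupgrade : ∀ e ∈ M', ∀ f ∈ M', IsGap G' e f → IsGap G e f := by
    intro e he f hf hg
    refine ⟨hg.1, fun a b ha hb hab => ?_⟩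
    have hA := fact1 e he a ha
    have hB := fact1 f hf b hb
    refine hg.2 a b ha hb ⟨hab, ?_, ?_⟩ <;>
      simp only [Set.mem_insert_iff, Set.mem_singleton_iff]
    · rintro (rfl | rfl); exacts [hA.1 rfl, hA.2 rfl]
    · rintro (rfl | rfl); exacts [hB.1 rfl, hB.2 rfl]
  have gapgen : ∀ f ∈ M', (∀ b ∈ f, ¬ G.Adj w b) → IsGap G s(v, w) f := by
    intro f hf hno
    constructor
    · intro u hu huf
      rcases Sym2.mem_iff.mp hu with h | h
      · exact (fact1 f hf u huf).2 h
      · exact (fact1 f hf u huf).1 h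
    · intro a b ha hb hab
      rcases Sym2.mem_iff.mp ha with h | h
      · subst h
        exact (fact1 f hf b hb).1 (hvnbr b hab)
      · subst h
        exact hno b hb hab
  have hadm : IsAdmissibleMatching G k (insert s(v, w) M') := by
    refine ⟨hmatch, ?_⟩
    by_cases hS : ∃ f ∈ M', ∃ b ∈ f, G.Adj w b
    · obtain ⟨f0, hf0, x, hxf0, hwx⟩ := hS
      have hnonleaf : ∀ f ∈ M', ∀ b ∈ f, G.Adj w b →
          b ∈ (G.neighborFinset w).filter (fun u => G.degree u ≠ 1) := by
        intro f hf b hb hwb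
        obtain ⟨c, hc⟩ := edge_endpoint' (hedges f hf) hb
        have hcw : c ≠ w := by
          have : c ∉ ({w, v} : Set V) := hc.2.2
          simp only [Set.mem_insert_iff, Set.mem_singleton_iff] at this
          exact fun h => this (Or.inl h)
        have hb2 : 1 < (G.neighborFinset b).card := by
          refine Finset.one_lt_card.mpr ⟨w, ?_, c, ?_, fun h => hcw h.symm⟩
          · simpa using hwb.symm
          · simpa using hc.1
        refine Finset.mem_filter.mpr ⟨by simpa using hwb, ?_⟩
        intro h
        rw [SimpleGraph.degree] at h
        omega
      have huniq : ∀ f ∈ M', ∀ b ∈ f, G.Adj w b → f = f0 := by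
        intro f hf b hb hwb
        have hbx : b = x := Finset.card_le_one.mp hdistant b
          (hnonleaf f hf b hb hwb) x (hnonleaf f0 hf0 x hxf0 hwx)
        subst hbx
        by_contra hne
        exact hdisj f hf f0 hf0 hne b hb hxf0
      obtain ⟨p0, hp0, hf0p0⟩ := (hmemM' f0).mp hf0
      have hgapB : ∀ f ∈ M', f ≠ f0 → IsGap G s(v, w) f := by
        intro f hf hne
        exact gapgen f hf (fun b hb hwb => hne (huniq f hf b hb hwb))
      have hp1not : insert s(v, w) p0 ∉ P'.erase p0 := by
        intro h
        exact he0M (hsub _ (Finset.mem_of_mem_erase h) (Finset.mem_insert_self _ p0))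
      have hp1disj : ∀ q ∈ P'.erase p0, Disjoint (insert s(v, w) p0) q := by
        intro q hq
        have hq' : q ∈ P' := Finset.mem_of_mem_erase hq
        have hqne : p0 ≠ q := fun h => (Finset.ne_of_mem_erase hq) h.symm
        refine Finset.disjoint_left.mpr ?_
        intro a ha haq
        rcases Finset.mem_insert.mp ha with rfl | ha
        · exact he0M (hsub q hq' haq)
        · exact Finset.disjoint_left.mp (hPdisj p0 hp0 q hq' hqne) ha haq
      have hp1gap : ∀ q ∈ P'.erase p0, ∀ e ∈ insert s(v, w) p0, ∀ f ∈ q, IsGap G e f := by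
        intro q hq e he f hf
        have hq' : q ∈ P' := Finset.mem_of_mem_erase hq
        have hqne : p0 ≠ q := fun h => (Finset.ne_of_mem_erase hq) h.symm
        have hfM : f ∈ M' := hsub q hq' hf
        rcases Finset.mem_insert.mp he with rfl | he
        · refine hgapB f hfM ?_
          rintro rfl
          exact Finset.disjoint_left.mp (hPdisj p0 hp0 q hq' hqne) hf0p0 hf
        · exact hupgrade e (hsub p0 hp0 he) f hfM (hPgap p0 hp0 q hq' hqne e he f hf)
      refine ⟨insert (insert s(v, w) p0) (P'.erase p0), ?_, ?_, ?_, ?_, ?_, ?_⟩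
      · intro p hp
        rcases Finset.mem_insert.mp hp with rfl | hp
        · exact Finset.insert_nonempty _ _
        · exact hPne p (Finset.mem_of_mem_erase hp)
      · intro p hp q hq hpq
        rcases Finset.mem_insert.mp hp with rfl | hp <;>
          rcases Finset.mem_insert.mp hq with rfl | hq
        · exact absurd rfl hpq
        · exact hp1disj q hq
        · exact (hp1disj p hp).symm
        · exact hPdisj p (Finset.mem_of_mem_erase hp) q (Finset.mem_of_mem_erase hq) hpq
      · ext a
        simp only [Finset.mem_biUnion, id, Finset.mem_insert, Finset.mem_erase]
        constructor
        · rintro ⟨p, (rfl | ⟨hpne, hp⟩), hap⟩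
          · rcases Finset.mem_insert.mp hap with rfl | hap
            · exact Or.inl rfl
            · exact Or.inr (hsub p0 hp0 hap)
          · exact Or.inr (hsub p hp hap)
        · rintro (rfl | ha)
          · exact ⟨insert s(v, w) p0, Or.inl rfl, Finset.mem_insert_self _ _⟩
          · obtain ⟨p, hp, hap⟩ := (hmemM' a).mp ha
            by_cases hpp0 : p = p0
            · subst hpp0
              exact ⟨insert s(v, w) p, Or.inl rfl, Finset.mem_insert_of_mem hap⟩
            · exact ⟨p, Or.inr ⟨hpp0, hp⟩, hap⟩
      · intro p hp q hq hpq e he f hf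
        rcases Finset.mem_insert.mp hp with rfl | hp <;>
          rcases Finset.mem_insert.mp hq with rfl | hq
        · exact absurd rfl hpq
        · exact hp1gap q hq e he f hf
        · exact isGap_symm' (hp1gap p hp f hf e he)
        · exact hupgrade e (hsub p (Finset.mem_of_mem_erase hp) he) f
            (hsub q (Finset.mem_of_mem_erase hq) hf)
            (hPgap p (Finset.mem_of_mem_erase hp) q (Finset.mem_of_mem_erase hq) hpq e he f hf)
      · have hc1 : (insert (insert s(v, w) p0) (P'.erase p0)).card = P'.card := by
          rw [Finset.card_insert_of_notMem hp1not, Finset.card_erase_of_mem hp0]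
          have : 0 < P'.card := Finset.card_pos.mpr ⟨p0, hp0⟩
          omega
        rw [hMcard, hc1]
        omega
      · intro p _
        exact acyclic_induce' G hforest _
    · push_neg at hS
      have hgapA : ∀ f ∈ M', IsGap G s(v, w) f := fun f hf => gapgen f hf (hS f hf)
      have hsingnot : ({s(v, w)} : Finset (Sym2 V)) ∉ P' := by
        intro h
        exact he0M (hsub _ h (Finset.mem_singleton_self _))
      have key : ∀ q ∈ P', Disjoint ({s(v, w)} : Finset (Sym2 V)) q := by
        intro q hq
        refine Finset.disjoint_left.mpr ?_
        intro a ha haq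
        rw [Finset.mem_singleton] at ha
        subst ha
        exact he0M (hsub q hq haq)
      refine ⟨insert {s(v, w)} P', ?_, ?_, ?_, ?_, ?_, ?_⟩
      · intro p hp
        rcases Finset.mem_insert.mp hp with rfl | hp
        · exact Finset.singleton_nonempty _
        · exact hPne p hp
      · intro p hp q hq hpq
        rcases Finset.mem_insert.mp hp with rfl | hp <;>
          rcases Finset.mem_insert.mp hq with rfl | hq
        · exact absurd rfl hpq
        · exact key q hq
        · exact (key p hp).symm
        · exact hPdisj p hp q hq hpq
      · ext a
        simp only [Finset.mem_biUnion, id, Finset.mem_insert, Finset.mem_singleton]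
        constructor
        · rintro ⟨p, (rfl | hp), hap⟩
          · exact Or.inl (Finset.mem_singleton.mp hap)
          · exact Or.inr (hsub p hp hap)
        · rintro (rfl | ha)
          · exact ⟨{s(v, w)}, Or.inl rfl, Finset.mem_singleton_self _⟩
          · obtain ⟨p, hp, hap⟩ := (hmemM' a).mp ha
            exact ⟨p, Or.inr hp, hap⟩
      · intro p hp q hq hpq e he f hf
        have key2 : ∀ q ∈ P', ∀ e ∈ ({s(v, w)} : Finset (Sym2 V)), ∀ f ∈ q, IsGap G e f := by
          intro q hq e he f hf
          rw [Finset.mem_singleton] at he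
          subst he
          exact hgapA f (hsub q hq hf)
        rcases Finset.mem_insert.mp hp with rfl | hp <;>
          rcases Finset.mem_insert.mp hq with rfl | hq
        · exact absurd rfl hpq
        · exact key2 q hq e he f hf
        · exact isGap_symm' (key2 p hp f hf e he)
        · exact hupgrade e (hsub p hp he) f (hsub q hq hf) (hPgap p hp q hq hpq e he f hf)
      · rw [hMcard, Finset.card_insert_of_notMem hsingnot]
        omega
      · intro p _
        exact acyclic_induce' G hforest _
  have hmem2 : (insert s(v, w) M').card ∈
      {m | ∃ M : Finset (Sym2 V), IsAdmissibleMatching G k M ∧ M.card = m} :=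
    ⟨_, hadm, rfl⟩
  have hfin : (insert s(v, w) M').card ≤ aim G k := le_csSup (hbdd G k) hmem2
  have haim : aim G' (k - 1) = M'.card := by rw [aim]; exact hcard.symm
  rw [haim]
  omega

end
end

section
/- Let I ⊂ K[x_1,...,x_{n-1}] be a squarefree monomial ideal and 1 < k ≤ ν(I). In S = K[x_1,...,x_n], the k-th squarefree power satisfies (I, x_n)^{[k]} = I^{[k]} + x_n · I^{[k-1]}. -/
open scoped Classical
open MvPolynomial

noncomputable section

namespace SqAux

variable {K : Type*} [Field K] {σ : Type*}

/-- indicator finsupp of a finset -/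
def ind (s : Finset σ) : σ →₀ ℕ := ∑ i ∈ s, Finsupp.single i 1

lemma ind_apply (s : Finset σ) (j : σ) : ind s j = if j ∈ s then 1 else 0 := by
  classical
  simp [ind, Finsupp.finset_sum_apply, Finsupp.single_apply, Finset.sum_ite_eq]

lemma prodX (s : Finset σ) : (∏ i ∈ s, X i : MvPolynomial σ K) = monomial (ind s) 1 := by
  classical
  induction s using Finset.induction with
  | empty => simp [ind]
  | @insert a s h ih =>
    rw [Finset.prod_insert h, ih,
      show ind (insert a s) = Finsupp.single a 1 + ind s by
        rw [ind, ind, Finset.sum_insert h],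
      show (X a : MvPolynomial σ K) = monomial (Finsupp.single a 1) 1 by
        rw [← X_pow_eq_monomial, pow_one], monomial_mul, one_mul]

/-- k-fold sumsets -/
def sums (G : Set (σ →₀ ℕ)) : ℕ → Set (σ →₀ ℕ)
  | 0 => {0}
  | k + 1 => {d | ∃ a ∈ G, ∃ b ∈ sums G k, d = a + b}

lemma sums_mono {G G' : Set (σ →₀ ℕ)} (h : G ⊆ G') : ∀ k, sums G k ⊆ sums G' k
  | 0 => le_refl _
  | k + 1 => by
    rintro d ⟨a, ha, b, hb, rfl⟩
    exact ⟨a, h ha, b, sums_mono h k hb, rfl⟩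

lemma span_pow (G : Set (σ →₀ ℕ)) : ∀ k,
    (Ideal.span ((fun d => monomial d (1 : K)) '' G)) ^ k =
      Ideal.span ((fun d => monomial d (1 : K)) '' sums G k)
  | 0 => by
    rw [pow_zero, Ideal.one_eq_top]
    have : ((fun d => monomial d (1 : K)) '' sums G 0) = {1} := by
      simp [sums]
    rw [this, Ideal.span_singleton_one]
  | k + 1 => by
    rw [pow_succ, span_pow G k, Ideal.span_mul_span']
    congr 1
    ext f
    constructor
    · rintro ⟨-, ⟨b, hb, rfl⟩, -, ⟨a, ha, rfl⟩, rfl⟩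
      refine ⟨a + b, ⟨a, ha, b, hb, rfl⟩, ?_⟩
      show monomial (a + b) (1 : K) = monomial b 1 * monomial a 1
      rw [monomial_mul, one_mul, add_comm]
    · rintro ⟨d, ⟨a, ha, b, hb, rfl⟩, rfl⟩
      refine ⟨monomial b 1, ⟨b, hb, rfl⟩, monomial a 1, ⟨a, ha, rfl⟩, ?_⟩
      show monomial b (1 : K) * monomial a 1 = monomial (a + b) 1
      rw [monomial_mul, one_mul, add_comm]

lemma mono_mem {G : Set (σ →₀ ℕ)} {d e : σ →₀ ℕ} (hd : d ∈ G) (hde : d ≤ e) :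
    monomial e (1 : K) ∈ Ideal.span ((fun d => monomial d (1 : K)) '' G) := by
  have : monomial e (1 : K) = monomial (e - d) 1 * monomial d 1 := by
    rw [monomial_mul, one_mul, tsub_add_cancel_of_le hde]
  rw [this]
  exact Ideal.mul_mem_left _ _ (Ideal.subset_span ⟨d, hd, rfl⟩)

lemma mem_iff {G : Set (σ →₀ ℕ)} {e : σ →₀ ℕ} :
    monomial e (1 : K) ∈ Ideal.span ((fun d => monomial d (1 : K)) '' G) ↔
      ∃ d ∈ G, d ≤ e := by
  constructor
  · intro h
    have := mem_ideal_span_monomial_image.mp h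
    refine this e ?_
    simp [support_monomial]
  · rintro ⟨d, hd, hde⟩
    exact mono_mem hd hde

lemma sums_decomp {δ : σ →₀ ℕ} {D : Set (σ →₀ ℕ)} : ∀ k d, d ∈ sums (insert δ D) k →
    ∃ m ≤ k, ∃ e ∈ sums D (k - m), d = m • δ + e
  | 0, d, hd => ⟨0, le_refl _, 0, rfl, by simpa [sums] using hd⟩
  | k + 1, d, hd => by
    obtain ⟨a, ha, b, hb, rfl⟩ := hd
    obtain ⟨m, hm, e, he, rfl⟩ := sums_decomp k b hb
    rcases ha with rfl | ha
    · exact ⟨m + 1, Nat.succ_le_succ hm, e, by rwa [Nat.succ_sub_succ],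
        by rw [succ_nsmul]; abel⟩
    · refine ⟨m, Nat.le_succ_of_le hm, a + e, ?_, by abel⟩
      rw [Nat.succ_sub (by omega)]
      exact ⟨a, ha, e, he, rfl⟩

lemma sums_apply_zero {D : Set (σ →₀ ℕ)} {j : σ} (hD : ∀ d ∈ D, d j = 0) :
    ∀ k, ∀ d ∈ sums D k, d j = 0
  | 0, d, hd => by simp [sums] at hd; simp [hd]
  | k + 1, d, hd => by
    obtain ⟨a, ha, b, hb, rfl⟩ := hd
    simp [hD a ha, sums_apply_zero hD k b hb]

end SqAux

/-- The graded maximal ideal `(x_1, …, x_n)`. -/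
def maxIdeal (K : Type*) [Field K] (n : ℕ) : Ideal (MvPolynomial (Fin n) K) :=
  Ideal.span (Set.range X)

/-- The `k`-th squarefree power `I^{[k]}` of a squarefree monomial ideal `I`:
the ideal generated by the squarefree monomials lying in `I^k`. -/
def sqPow {K : Type*} [Field K] {n : ℕ} (I : Ideal (MvPolynomial (Fin n) K)) (k : ℕ) :
    Ideal (MvPolynomial (Fin n) K) :=
  Ideal.span {f | (∃ s : Finset (Fin n), f = ∏ i ∈ s, X i) ∧ f ∈ I ^ k}

/-- The monomial grade `ν(I)`: the maximum length of a regular sequence of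
monomials contained in `I`. -/
def monomialGrade {K : Type*} [Field K] {n : ℕ}
    (I : Ideal (MvPolynomial (Fin n) K)) : ℕ :=
  sSup {k | ∃ rs : List (MvPolynomial (Fin n) K), rs.length = k ∧
    (∀ r ∈ rs, r ∈ I ∧ ∃ d c, r = monomial d c) ∧
    RingTheory.Sequence.IsRegular (MvPolynomial (Fin n) K) rs}

/-- For a squarefree monomial ideal `I ⊂ K[x_1,…,x_n]` not involving the last
variable and `1 < k ≤ ν(I)`, in `S = K[x_1,…,x_{n+1}]` one has
`(I, x_{n+1})^{[k]} = I^{[k]} + x_{n+1}·I^{[k-1]}`. -/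
theorem stmt_9 (K : Type*) [Field K] (n : ℕ)
    (I : Ideal (MvPolynomial (Fin (n + 1)) K))
    (A : Set (Finset (Fin (n + 1)))) (hA : ∀ s ∈ A, Fin.last n ∉ s)
    (hI : I = Ideal.span ((fun s : Finset (Fin (n + 1)) => ∏ i ∈ s, X i) '' A))
    (k : ℕ) (hk1 : 1 < k) (hk2 : k ≤ monomialGrade I) :
    sqPow (I ⊔ Ideal.span {(X (Fin.last n) : MvPolynomial (Fin (n + 1)) K)}) k =
      sqPow I k ⊔
        Ideal.span {(X (Fin.last n) : MvPolynomial (Fin (n + 1)) K)} * sqPow I (k - 1) := by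
  classical
  set δ : Fin (n + 1) →₀ ℕ := Finsupp.single (Fin.last n) 1 with hδ
  set D : Set (Fin (n + 1) →₀ ℕ) := SqAux.ind '' A with hD
  have hX : (X (Fin.last n) : MvPolynomial (Fin (n + 1)) K) = monomial δ 1 := by
    rw [← X_pow_eq_monomial, pow_one]
  have hIeq : I = Ideal.span ((fun d => monomial d (1 : K)) '' D) := by
    rw [hI, hD, Set.image_image]
    congr 1
    exact Set.image_congr fun s _ => SqAux.prodX s
  have hJeq : I ⊔ Ideal.span {(X (Fin.last n) : MvPolynomial (Fin (n + 1)) K)} =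
      Ideal.span ((fun d => monomial d (1 : K)) '' insert δ D) := by
    rw [hIeq, hX, ← Ideal.span_union, Set.insert_eq, Set.image_union,
      Set.image_singleton, Set.union_comm]
  have hIk : I ^ k = Ideal.span ((fun d => monomial d (1 : K)) '' SqAux.sums D k) := by
    rw [hIeq, SqAux.span_pow]
  have hIk1 : I ^ (k - 1) =
      Ideal.span ((fun d => monomial d (1 : K)) '' SqAux.sums D (k - 1)) := by
    rw [hIeq, SqAux.span_pow]
  have hJk : (I ⊔ Ideal.span {(X (Fin.last n) : MvPolynomial (Fin (n + 1)) K)}) ^ k =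
      Ideal.span ((fun d => monomial d (1 : K)) '' SqAux.sums (insert δ D) k) := by
    rw [hJeq, SqAux.span_pow]
  have hDlast : ∀ d ∈ D, d (Fin.last n) = 0 := by
    rintro d ⟨s, hs, rfl⟩
    rw [SqAux.ind_apply]
    simp [hA s hs]
  have hkk : k - 1 + 1 = k := by omega
  -- key membership: δ + d ∈ sums (insert δ D) k whenever d ∈ sums D (k-1)
  have hkey : ∀ d ∈ SqAux.sums D (k - 1), δ + d ∈ SqAux.sums (insert δ D) k := by
    intro d hd
    rw [← hkk]
    exact ⟨δ, Set.mem_insert _ _, d, SqAux.sums_mono (Set.subset_insert _ _) _ hd, rfl⟩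
  refine le_antisymm (Ideal.span_le.mpr ?_) (sup_le (Ideal.span_le.mpr ?_) ?_)
  · -- LHS ≤ RHS
    rintro f ⟨⟨s, rfl⟩, hf⟩
    rw [SqAux.prodX] at hf ⊢
    rw [hJk, SqAux.mem_iff] at hf
    obtain ⟨d, hdset, hdle⟩ := hf
    obtain ⟨m, hm, e, he, rfl⟩ := SqAux.sums_decomp _ _ hdset
    have helast : e (Fin.last n) = 0 := SqAux.sums_apply_zero hDlast _ e he
    rw [Finsupp.le_def] at hdle
    have hm1 : m ≤ 1 := by
      have h2 := hdle (Fin.last n)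
      rw [SqAux.ind_apply] at h2
      simp only [Finsupp.add_apply, Finsupp.coe_smul, Pi.smul_apply, hδ,
        Finsupp.single_eq_same, helast, smul_eq_mul, mul_one, add_zero] at h2
      split at h2 <;> omega
    rcases Nat.le_one_iff_eq_zero_or_eq_one.mp hm1 with rfl | rfl
    · -- no copy of δ: f ∈ I^[k]
      rw [zero_smul, zero_add] at hdle
      refine Ideal.mem_sup_left (Ideal.subset_span ⟨⟨s, (SqAux.prodX s).symm⟩, ?_⟩)
      rw [hIk, SqAux.mem_iff]
      exact ⟨e, by simpa using he, Finsupp.le_def.mpr hdle⟩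
    · -- one copy of δ
      rw [one_smul] at hdle
      have hlast : Fin.last n ∈ s := by
        have h2 := hdle (Fin.last n)
        rw [SqAux.ind_apply] at h2
        simp only [Finsupp.add_apply, hδ, Finsupp.single_eq_same, helast, add_zero] at h2
        by_contra hmem
        simp [hmem] at h2
      set s' := s.erase (Fin.last n) with hs'
      have hse : SqAux.ind s = δ + SqAux.ind s' := by
        rw [SqAux.ind, SqAux.ind, hδ]
        exact (Finset.add_sum_erase s _ hlast).symm
      have he_le : e ≤ SqAux.ind s' := by
        rw [Finsupp.le_def]
        intro i
        rcases eq_or_ne i (Fin.last n) with rfl | hi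
        · simp [helast]
        · have h2 := hdle i
          rw [Finsupp.add_apply, hδ, Finsupp.single_apply,
            if_neg (fun h => hi h.symm), zero_add, SqAux.ind_apply] at h2
          rw [SqAux.ind_apply, hs']
          by_cases his : i ∈ s
          · simp only [if_pos his] at h2
            simp [Finset.mem_erase, hi, his, h2]
          · simp only [if_neg his] at h2
            simp [Finset.mem_erase, his, h2]

      have hu : monomial (SqAux.ind s') (1 : K) ∈ I ^ (k - 1) := by
        rw [hIk1, SqAux.mem_iff]
        exact ⟨e, by simpa using he, he_le⟩
      have husq : monomial (SqAux.ind s') (1 : K) ∈ sqPow I (k - 1) :=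
        Ideal.subset_span ⟨⟨s', (SqAux.prodX s').symm⟩, hu⟩
      refine Ideal.mem_sup_right ?_
      have hfe : monomial (SqAux.ind s) (1 : K) =
          X (Fin.last n) * monomial (SqAux.ind s') 1 := by
        rw [hX, monomial_mul, one_mul, hse]
      rw [hfe]
      exact Ideal.mul_mem_mul (Ideal.subset_span rfl) husq
  · -- I^[k] ≤ LHS
    rintro f ⟨⟨s, rfl⟩, hf⟩
    exact Ideal.subset_span ⟨⟨s, rfl⟩, Ideal.pow_right_mono le_sup_left k hf⟩
  · -- x·I^[k-1] ≤ LHS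
    show Ideal.span {(X (Fin.last n) : MvPolynomial (Fin (n + 1)) K)} *
      Ideal.span {f | (∃ s : Finset (Fin (n + 1)), f = ∏ i ∈ s, X i) ∧ f ∈ I ^ (k - 1)} ≤ _
    rw [Ideal.span_mul_span']
    refine Ideal.span_le.mpr ?_
    rintro g ⟨x, hx, u, ⟨⟨s, rfl⟩, hu⟩, rfl⟩
    rw [Set.mem_singleton_iff] at hx
    subst hx
    dsimp only
    rw [SqAux.prodX] at hu ⊢
    rw [hIk1, SqAux.mem_iff] at hu
    obtain ⟨d, hd, hdle⟩ := hu
    have hdlast : d (Fin.last n) = 0 := SqAux.sums_apply_zero hDlast _ d hd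
    by_cases hmem : Fin.last n ∈ s
    · -- u already divisible by x_last: u itself lies in J^[k]
      have hdle2 : δ + d ≤ SqAux.ind s := by
        rw [Finsupp.le_def]
        intro i
        rcases eq_or_ne i (Fin.last n) with rfl | hi
        · simp [hδ, hdlast, SqAux.ind_apply, hmem]
        · have h3 := Finsupp.le_def.mp hdle i
          rw [Finsupp.add_apply, hδ, Finsupp.single_apply,
            if_neg (fun h => hi h.symm), zero_add]
          exact h3
      have husq : monomial (SqAux.ind s) (1 : K) ∈
          sqPow (I ⊔ Ideal.span {(X (Fin.last n) : MvPolynomial (Fin (n + 1)) K)}) k := by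
        refine Ideal.subset_span ⟨⟨s, (SqAux.prodX s).symm⟩, ?_⟩
        rw [hJk, SqAux.mem_iff]
        exact ⟨δ + d, hkey d hd, hdle2⟩
      exact Ideal.mul_mem_left _ _ husq
    · -- multiply in x_last: get the squarefree monomial on insert
      have hins : SqAux.ind (insert (Fin.last n) s) = δ + SqAux.ind s := by
        rw [SqAux.ind, SqAux.ind, Finset.sum_insert hmem, hδ]
      have hfe : X (Fin.last n) * monomial (SqAux.ind s) (1 : K) =
          monomial (SqAux.ind (insert (Fin.last n) s)) 1 := by
        rw [hX, monomial_mul, one_mul, hins]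
      rw [hfe]
      refine Ideal.subset_span ⟨⟨insert (Fin.last n) s, (SqAux.prodX _).symm⟩, ?_⟩
      rw [hJk, SqAux.mem_iff]
      exact ⟨δ + d, hkey d hd, by rw [hins]; exact add_le_add_right hdle δ⟩

end
end

section
/- Let G be a forest with distant leaf n and distant edge {n-1,n}. Let G_1 = G restricted to V(G)\{n} and G_2 = G restricted to V(G)\{n-1,n}. Then for all 1 ≤ k ≤ ν(G), I(G)^{[k]} = I(G_1)^{[k]} + x_n x_{n-1} I(G_2)^{[k-1]}, where I(G_2)^{[0]} = (1). -/
open scoped Classical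
open MvPolynomial RingTheory

noncomputable section

/-- The `k`-th squarefree power `I(G)^{[k]}` of the edge ideal of a graph `G` on `Fin n`:
the ideal generated by the monomials `x_{V(M)}` for all `k`-matchings `M` of `G`.
For `k = 0` this is the unit ideal. -/
def edgeIdealSqPow (K : Type*) [Field K] {n : ℕ} (G : SimpleGraph (Fin n)) (k : ℕ) :
    Ideal (MvPolynomial (Fin n) K) :=
  Ideal.span {f | ∃ M : Finset (Sym2 (Fin n)), IsMatchingSet G M ∧ M.card = k ∧
    f = ∏ v ∈ Finset.univ.filter (fun v => ∃ e ∈ M, v ∈ e), X v}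

/-- The depth of `S/I` : the maximum length of an `S/I`-regular sequence contained in
the graded maximal ideal. -/
def depthQuot {K : Type*} [Field K] {n : ℕ} (I : Ideal (MvPolynomial (Fin n) K)) : ℕ :=
  sSup {d | ∃ rs : List (MvPolynomial (Fin n) K), rs.length = d ∧
    (∀ r ∈ rs, r ∈ maxIdeal K n) ∧
    RingTheory.Sequence.IsRegular (MvPolynomial (Fin n) K ⧸ I) rs}

/-- The normalized depth function of the edge ideal of `G`:
`g_{I(G)}(k) = depth(S/I(G)^{[k]}) - (2k-1)`. -/
def gEdge (K : Type*) [Field K] {n : ℕ} (G : SimpleGraph (Fin n)) (k : ℕ) : ℤ :=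
  (depthQuot (edgeIdealSqPow K G k) : ℤ) - (2 * k - 1)


lemma delV_edge {V : Type*} {G : SimpleGraph V} {s : Set V} {e : Sym2 V}
    (he : e ∈ (delV G s).edgeSet) : e ∈ G.edgeSet ∧ ∀ v ∈ e, v ∉ s := by
  induction e using Sym2.ind with
  | _ a b =>
    rw [SimpleGraph.mem_edgeSet] at he
    obtain ⟨h1, h2, h3⟩ := he
    refine ⟨h1, ?_⟩
    intro v hv
    rw [Sym2.mem_iff] at hv
    rcases hv with rfl | rfl <;> assumption

lemma mem_delV_edge {V : Type*} {G : SimpleGraph V} {s : Set V} {e : Sym2 V}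
    (h1 : e ∈ G.edgeSet) (h2 : ∀ v ∈ e, v ∉ s) : e ∈ (delV G s).edgeSet := by
  induction e using Sym2.ind with
  | _ a b =>
    rw [SimpleGraph.mem_edgeSet] at h1 ⊢
    exact ⟨h1, h2 a (by simp), h2 b (by simp)⟩

lemma cov_eq {n : ℕ} (vn vw : Fin n) (M' : Finset (Sym2 (Fin n)))
    (h : ∀ e ∈ M', vn ∉ e ∧ vw ∉ e) :
    Finset.univ.filter (fun v => ∃ e ∈ insert (s(vw, vn)) M', v ∈ e)
      = insert vn (insert vw (Finset.univ.filter (fun v => ∃ e ∈ M', v ∈ e))) := by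
  ext v
  simp only [Finset.mem_filter, Finset.mem_insert, Finset.mem_univ, true_and]
  constructor
  · rintro ⟨e, he | he, hv⟩
    · subst he
      rw [Sym2.mem_iff] at hv
      tauto
    · exact Or.inr (Or.inr ⟨e, he, hv⟩)
  · rintro (hv | hv | ⟨e, he, hv⟩)
    · exact ⟨s(vw, vn), Or.inl rfl, by simp [hv]⟩
    · exact ⟨s(vw, vn), Or.inl rfl, by simp [hv]⟩
    · exact ⟨e, Or.inr he, hv⟩

lemma prod_cov {K : Type*} [Field K] {n : ℕ} (vn vw : Fin n) (hne : vn ≠ vw)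
    (M' : Finset (Sym2 (Fin n))) (h : ∀ e ∈ M', vn ∉ e ∧ vw ∉ e) :
    (∏ v ∈ Finset.univ.filter (fun v => ∃ e ∈ insert (s(vw, vn)) M', v ∈ e),
        (X v : MvPolynomial (Fin n) K))
      = (X vn * X vw) *
        ∏ v ∈ Finset.univ.filter (fun v => ∃ e ∈ M', v ∈ e), X v := by
  rw [cov_eq vn vw M' h, Finset.prod_insert, Finset.prod_insert, mul_assoc]
  · simp only [Finset.mem_filter, Finset.mem_univ, true_and, not_exists]
    exact fun e he => (h e he.1).2 he.2
  · simp only [Finset.mem_insert, Finset.mem_filter, Finset.mem_univ, true_and, not_or, not_exists]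
    exact ⟨hne, fun e he => (h e he.1).1 he.2⟩

lemma gen_mem {K : Type*} [Field K] {n : ℕ} (G : SimpleGraph (Fin n)) (k : ℕ)
    (M : Finset (Sym2 (Fin n))) (h1 : IsMatchingSet G M) (h2 : M.card = k) :
    (∏ v ∈ Finset.univ.filter (fun v => ∃ e ∈ M, v ∈ e), (X v : MvPolynomial (Fin n) K))
      ∈ edgeIdealSqPow K G k :=
  Ideal.subset_span ⟨M, h1, h2, rfl⟩

/-- Let `G` be a forest with distant leaf `vn` (the last vertex) and distant edge
`{vw, vn}`. With `G₁ = G - vn` and `G₂ = G - {vn, vw}`, for all `1 ≤ k ≤ ν(G)`,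
`I(G)^{[k]} = I(G₁)^{[k]} + x_{vn} x_{vw} · I(G₂)^{[k-1]}` (with `I(G₂)^{[0]} = (1)`). -/
theorem stmt_10 (K : Type*) [Field K] {n : ℕ} (hn : 2 ≤ n)
    (G : SimpleGraph (Fin n)) [DecidableRel G.Adj] (hforest : G.IsAcyclic)
    (vn vw : Fin n) (hvn : (vn : ℕ) = n - 1) (hvw : (vw : ℕ) = n - 2)
    (hadj : G.Adj vw vn) (hleaf : G.degree vn = 1)
    (hdistant : ((G.neighborFinset vw).filter (fun u => G.degree u ≠ 1)).card ≤ 1)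
    (k : ℕ) (h1 : 1 ≤ k) (h2 : k ≤ matchingNumber G) :
    edgeIdealSqPow K G k =
      edgeIdealSqPow K (delV G {vn}) k ⊔
        Ideal.span {(X vn * X vw : MvPolynomial (Fin n) K)} *
          edgeIdealSqPow K (delV G {vn, vw}) (k - 1) := by
  have hne : vn ≠ vw := by
    intro h
    rw [h, hvw] at hvn
    omega
  apply le_antisymm
  · rw [edgeIdealSqPow, Ideal.span_le]
    rintro f ⟨M, hM, hcard, rfl⟩
    by_cases hcase : ∃ e ∈ M, vn ∈ e
    · obtain ⟨e₀, he₀M, hvne₀⟩ := hcase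
      have hnbr : G.neighborFinset vn = {vw} := by
        apply Finset.eq_singleton_iff_unique_mem.mpr
        refine ⟨by rw [SimpleGraph.mem_neighborFinset]; exact hadj.symm, ?_⟩
        intro u hu
        by_contra hne'
        have hsub : ({vw, u} : Finset (Fin n)) ⊆ G.neighborFinset vn := by
          intro x hx
          rcases Finset.mem_insert.mp hx with rfl | hx
          · rw [SimpleGraph.mem_neighborFinset]; exact hadj.symm
          · rw [Finset.mem_singleton] at hx; subst hx; exact hu
        have hcardle := Finset.card_le_card hsub
        rw [Finset.card_insert_of_notMem (by simp [Ne.symm hne']),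
          Finset.card_singleton] at hcardle
        rw [SimpleGraph.degree] at hleaf
        omega
      have he₀ : e₀ = s(vw, vn) := by
        obtain ⟨u, hu⟩ : ∃ u, e₀ = s(vn, u) :=
          ⟨Sym2.Mem.other hvne₀, (Sym2.other_spec hvne₀).symm⟩
        subst hu
        have hadj' : G.Adj vn u := hM.1 _ he₀M
        have hmem : u ∈ G.neighborFinset vn := by
          rwa [SimpleGraph.mem_neighborFinset]
        rw [hnbr, Finset.mem_singleton] at hmem
        subst hmem
        exact Sym2.eq_swap
      subst he₀
      set M' := M.erase s(vw, vn) with hM'def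
      have hins : M = insert s(vw, vn) M' := (Finset.insert_erase he₀M).symm
      have havoid : ∀ e ∈ M', vn ∉ e ∧ vw ∉ e := by
        intro e he
        have heM : e ∈ M := Finset.mem_of_mem_erase he
        have hnee : s(vw, vn) ≠ e := (Finset.ne_of_mem_erase he).symm
        exact ⟨hM.2 _ he₀M _ heM hnee vn (by simp),
          hM.2 _ he₀M _ heM hnee vw (by simp)⟩
      have hM2 : IsMatchingSet (delV G {vn, vw}) M' := by
        constructor
        · intro e he
          refine mem_delV_edge (hM.1 _ (Finset.mem_of_mem_erase he)) ?_
          intro v hv hvs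
          obtain ⟨ha, hb⟩ := havoid e he
          simp only [Set.mem_insert_iff, Set.mem_singleton_iff] at hvs
          rcases hvs with rfl | rfl
          · exact ha hv
          · exact hb hv
        · exact fun e he f hf =>
            hM.2 e (Finset.mem_of_mem_erase he) f (Finset.mem_of_mem_erase hf)
      have hcard' : M'.card = k - 1 := by
        rw [hM'def, Finset.card_erase_of_mem he₀M, hcard]
      rw [hins, prod_cov vn vw hne M' havoid]
      exact Ideal.mem_sup_right
        (Ideal.mul_mem_mul (Ideal.subset_span rfl) (gen_mem _ _ M' hM2 hcard'))
    · push_neg at hcase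
      refine Ideal.mem_sup_left (gen_mem _ _ M ⟨?_, hM.2⟩ hcard)
      intro e he
      refine mem_delV_edge (hM.1 e he) ?_
      intro v hv hvs
      rw [Set.mem_singleton_iff] at hvs
      subst hvs
      exact hcase e he hv
  · apply sup_le
    · rw [edgeIdealSqPow, Ideal.span_le]
      rintro f ⟨M, hM, hcard, rfl⟩
      exact gen_mem _ _ M ⟨fun e he => (delV_edge (hM.1 e he)).1, hM.2⟩ hcard
    · rw [edgeIdealSqPow, Ideal.span_mul_span', Ideal.span_le]
      rintro x hx
      rw [Set.mem_mul] at hx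
      obtain ⟨a, ha, b, hb, rfl⟩ := hx
      rw [Set.mem_singleton_iff] at ha
      subst ha
      obtain ⟨M', hM', hcard', rfl⟩ := hb
      have havoid : ∀ e ∈ M', vn ∉ e ∧ vw ∉ e := by
        intro e he
        have := (delV_edge (hM'.1 e he)).2
        exact ⟨fun hv => this vn hv (by simp), fun hv => this vw hv (by simp)⟩
      have hnotmem : s(vw, vn) ∉ M' := fun h => (havoid _ h).1 (by simp)
      have hMmatch : IsMatchingSet G (insert s(vw, vn) M') := by
        constructor
        · intro e he
          rcases Finset.mem_insert.mp he with rfl | he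
          · rw [SimpleGraph.mem_edgeSet]; exact hadj
          · exact (delV_edge (hM'.1 e he)).1
        · intro e he f hf hef v hv
          rcases Finset.mem_insert.mp he with rfl | he <;>
            rcases Finset.mem_insert.mp hf with rfl | hf
          · exact absurd rfl hef
          · rw [Sym2.mem_iff] at hv
            rcases hv with h | h <;> rw [h]
            · exact (havoid f hf).2
            · exact (havoid f hf).1
          · intro hvf
            rw [Sym2.mem_iff] at hvf
            obtain ⟨ha, hb⟩ := havoid e he
            rcases hvf with h | h <;> rw [h] at hv
            · exact hb hv
            · exact ha hv
          · exact hM'.2 e he f hf hef v hv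
      have hcardM : (insert s(vw, vn) M').card = k := by
        rw [Finset.card_insert_of_notMem hnotmem, hcard']
        omega
      have := gen_mem (K := K) G k _ hMmatch hcardM
      rwa [prod_cov vn vw hne M' havoid] at this

end
end
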